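/- If f is a solution of the ODE u' = φ(x,u), then the curve γ_f(t) = (t, f(t)) satisfies the geodesic equation of the metric g = (1+φ²)dx² - 2φ dx du + du², i.e., the covariant derivative of its tangent vector along itself vanishes; in components relative to the frame {A, ∂_u}, both components of ∇_{γ̇}γ̇ given by (-φ_u(f'-φ)², f'' - φφ_u - φ_x) vanish. -/

import Mathlib

/-- If f solves u' = φ(x,u), then the curve γ_f(t) = (t, f(t))
satisfies the geodesic equation: both components (relative to the frame
{A, ∂_u}) of the covariant derivative of its tangent along itself, namely
(-φ_u(f'-φ)², f'' - φφ_u - φ_x), vanish. -/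
theorem stmt2 (U : Set (ℝ × ℝ)) (hU : IsOpen U) (φ φx φu : ℝ × ℝ → ℝ)
    (hφ : ∀ p ∈ U, HasFDerivAt φ
      (φx p • ContinuousLinearMap.fst ℝ ℝ ℝ + φu p • ContinuousLinearMap.snd ℝ ℝ ℝ) p)
    (I : Set ℝ) (hI : IsOpen I) (f f' f'' : ℝ → ℝ)
    (hgraph : ∀ t ∈ I, (t, f t) ∈ U)
    (hf : ∀ t ∈ I, HasDerivAt f (f' t) t)
    (hf' : ∀ t ∈ I, HasDerivAt f' (f'' t) t)
    (hsol : ∀ t ∈ I, f' t = φ (t, f t)) :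
    ∀ t ∈ I,
      -(φu (t, f t)) * (f' t - φ (t, f t))^2 = 0 ∧
      f'' t - φ (t, f t) * φu (t, f t) - φx (t, f t) = 0 := by
  intro t ht
  have h1 : f' t - φ (t, f t) = 0 := by rw [hsol t ht]; ring
  refine ⟨by rw [h1]; ring, ?_⟩
  -- curve derivative
  have hc : HasDerivAt (fun s => ((s, f s) : ℝ × ℝ)) (1, f' t) t :=
    (hasDerivAt_id t).prodMk (hf t ht)
  have hcomp : HasDerivAt (fun s => φ (s, f s))
      (φx (t, f t) * 1 + φu (t, f t) * f' t) t := by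
    have := (hφ (t, f t) (hgraph t ht)).comp_hasDerivAt t hc
    simp at this
    rw [mul_one]
    exact this
  have heq : f' =ᶠ[nhds t] fun s => φ (s, f s) :=
    Filter.eventuallyEq_of_mem (hI.mem_nhds ht) (fun s hs => hsol s hs)
  have hder : HasDerivAt f' (φx (t, f t) * 1 + φu (t, f t) * f' t) t :=
    hcomp.congr_of_eventuallyEq heq
  have huniq : f'' t = φx (t, f t) * 1 + φu (t, f t) * f' t :=
    (hf' t ht).unique hder
  rw [huniq, hsol t ht]; ring
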